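/- arXiv:1401.3559 — 3 statements merged into one kernel-verified Lean document; each statement's English description precedes it below -/
import Mathlib

section
/- If π : ℝ → (0,∞) is log-Lipschitz with constant L, i.e. |log π(y) − log π(x)| ≤ L|y−x| for all x,y, and ∫ℝ π(x) dx = 1, then for every positive integer m, ∑_{i∈ℤ} π(i/m) ≤ m·e^{L/m}. -/
open MeasureTheory

/-- If π is positive, log-Lipschitz with constant L, and integrates to 1 over ℝ,
then for every positive integer m, ∑_{i∈ℤ} π(i/m) ≤ m·e^{L/m}. -/
theorem lattice_sum_bound (π : ℝ → ℝ) (L : ℝ)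
    (hpos : ∀ x, 0 < π x)
    (hlip : ∀ x y : ℝ, |Real.log (π y) - Real.log (π x)| ≤ L * |y - x|)
    (hint : ∫ x : ℝ, π x = 1)
    (m : ℕ) (hm : 0 < m) :
    ∑' i : ℤ, π ((i : ℝ) / m) ≤ m * Real.exp (L / m) := by
  have hm' : (0 : ℝ) < m := Nat.cast_pos.mpr hm
  have hL : 0 ≤ L := by
    have h := hlip 0 1
    simp at h
    exact le_trans (abs_nonneg _) h
  -- π is integrable
  have hInt : Integrable π := by
    by_contra h
    rw [integral_undef h] at hint
    norm_num at hint
  set S : ℤ → Set ℝ := fun i => Set.Ioc ((i : ℝ) / m) (((i : ℝ) + 1) / m) with hS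
  have hmeas : ∀ i, MeasurableSet (S i) := fun i => measurableSet_Ioc
  have hdisj : Pairwise (Function.onFun Disjoint S) := by
    intro i j hij
    apply Set.Ioc_disjoint_Ioc.mpr
    rcases lt_or_gt_of_ne hij with h | h
    · refine le_trans (min_le_left _ _) (le_trans ?_ (le_max_right _ _))
      apply div_le_div_of_nonneg_right ?_ hm'.le
      have : i + 1 ≤ j := h
      exact_mod_cast this
    · refine le_trans (min_le_right _ _) (le_trans ?_ (le_max_left _ _))
      apply div_le_div_of_nonneg_right ?_ hm'.le
      have : j + 1 ≤ i := h
      exact_mod_cast this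
  have hcover : (⋃ i, S i) = Set.univ := by
    ext x
    simp only [Set.mem_iUnion, Set.mem_univ, iff_true]
    refine ⟨⌈x * m⌉ - 1, ?_⟩
    simp only [hS, Set.mem_Ioc]
    constructor
    · rw [div_lt_iff₀ hm']
      push_cast
      linarith [Int.ceil_lt_add_one (x * m)]
    · rw [le_div_iff₀ hm']
      push_cast
      linarith [Int.le_ceil (x * m)]
  -- pointwise lower bound on each cell
  have hpt : ∀ i : ℤ, ∀ x ∈ S i, π ((i : ℝ) / m) * Real.exp (-(L / m)) ≤ π x := by
    intro i x hx
    obtain ⟨hx1, hx2⟩ := hx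
    have h := hlip x ((i : ℝ) / m)
    have hom : (0:ℝ) < 1 / m := by positivity
    have habs : |(i : ℝ) / m - x| ≤ 1 / m := by
      rw [abs_le]
      constructor
      · have : ((i : ℝ) + 1) / m = (i : ℝ) / m + 1 / m := by ring
        rw [this] at hx2
        linarith
      · linarith
    have h2 : Real.log (π ((i : ℝ) / m)) - Real.log (π x) ≤ L / m := by
      calc Real.log (π ((i : ℝ) / m)) - Real.log (π x)
          ≤ |Real.log (π ((i : ℝ) / m)) - Real.log (π x)| := le_abs_self _
        _ ≤ L * |(i : ℝ) / m - x| := h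
        _ ≤ L * (1 / m) := mul_le_mul_of_nonneg_left habs hL
        _ = L / m := by ring
    have h3 : π ((i : ℝ) / m) ≤ π x * Real.exp (L / m) := by
      have := Real.exp_le_exp.mpr (by linarith : Real.log (π ((i : ℝ) / m)) ≤ Real.log (π x) + L / m)
      rwa [Real.exp_log (hpos _), Real.exp_add, Real.exp_log (hpos _)] at this
    rw [Real.exp_neg]
    rw [mul_inv_le_iff₀ (Real.exp_pos _)]
    linarith [h3]
  -- integral lower bound on each cell
  have hcell : ∀ i : ℤ, π ((i : ℝ) / m) ≤ m * Real.exp (L / m) * ∫ x in S i, π x := by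
    intro i
    have hvol : (volume (S i)).toReal = 1 / m := by
      rw [hS]
      rw [Real.volume_Ioc]
      rw [ENNReal.toReal_ofReal (by
        have : ((i:ℝ)+1)/m - (i:ℝ)/m = 1/m := by ring
        rw [this]; positivity)]
      ring
    have hne : volume (S i) ≠ ⊤ := by
      rw [hS, Real.volume_Ioc]; exact ENNReal.ofReal_ne_top
    have h := setIntegral_ge_of_const_le (hmeas i) hne (hpt i) hInt.integrableOn
    rw [measureReal_def, hvol, smul_eq_mul, mul_comm (1 / (m:ℝ))] at h
    have hexp := Real.exp_pos (L / m)
    have key : π ((i : ℝ) / m) * Real.exp (-(L / m)) * (1 / m) ≤ ∫ x in S i, π x := h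
    rw [Real.exp_neg] at key
    have h2 := mul_le_mul_of_nonneg_right key
      (by positivity : (0:ℝ) ≤ m * Real.exp (L / m))
    have heq : π ((i : ℝ) / m) * (Real.exp (L / m))⁻¹ * (1 / m) * (m * Real.exp (L / m))
        = π ((i : ℝ) / m) := by
      field_simp
    rw [heq] at h2
    rw [show (m:ℝ) * Real.exp (L / m) * ∫ x in S i, π x
        = (∫ x in S i, π x) * ((m:ℝ) * Real.exp (L / m)) from mul_comm _ _]
    exact h2
  -- sum of integrals
  have hsum : HasSum (fun i : ℤ => ∫ x in S i, π x) 1 := by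
    have h := hasSum_integral_iUnion hmeas hdisj (by rw [hcover]; exact hInt.integrableOn)
    rwa [hcover, setIntegral_univ, hint] at h
  have hsummable : Summable (fun i : ℤ => m * Real.exp (L / m) * ∫ x in S i, π x) :=
    (hsum.summable.mul_left _)
  have hsummable' : Summable (fun i : ℤ => π ((i : ℝ) / m)) :=
    Summable.of_nonneg_of_le (fun i => (hpos _).le) hcell hsummable
  calc ∑' i : ℤ, π ((i : ℝ) / m)
      ≤ ∑' i : ℤ, m * Real.exp (L / m) * ∫ x in S i, π x :=
        Summable.tsum_le_tsum hcell hsummable' hsummable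
    _ = m * Real.exp (L / m) * ∑' i : ℤ, ∫ x in S i, π x := tsum_mul_left
    _ = m * Real.exp (L / m) := by rw [hsum.tsum_eq, mul_one]
end

section
/- Consider the function a(ℓ) = 2ℓ²Φ(−ℓ√I/2) for ℓ > 0 and fixed I > 0, where Φ is the standard normal CDF. Then a attains a unique maximum at the value ℓ* satisfying the first-order condition 2ℓΦ(−ℓ√I/2) = (ℓ²√I/2)φ(ℓ√I/2) (with φ the standard normal density), and at this maximizer the quantity 2Φ(−ℓ*√I/2) (the asymptotic acceptance rate) is a constant ≈ 0.2338 independent of I. -/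
open ProbabilityTheory MeasureTheory Real Set Filter

/-- Standard normal CDF. -/
noncomputable def stdNormalCDF (x : ℝ) : ℝ :=
  ∫ t in Set.Iic x, ProbabilityTheory.gaussianPDFReal 0 1 t

namespace TemperingAux

noncomputable def npdf (x : ℝ) : ℝ := gaussianPDFReal 0 1 x

lemma npdf_eq (x : ℝ) : npdf x = (Real.sqrt (2 * π))⁻¹ * Real.exp (-(x ^ 2 / 2)) := by
  rw [npdf, gaussianPDFReal]
  norm_num
  ring_nf
  tauto

lemma npdf_pos (x : ℝ) : 0 < npdf x := gaussianPDFReal_pos 0 1 x one_ne_zero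

lemma npdf_cont : Continuous npdf := by
  simp only [funext npdf_eq]
  fun_prop

lemma npdf_integrable : Integrable npdf := integrable_gaussianPDFReal 0 1

lemma npdf_even (x : ℝ) : npdf (-x) = npdf x := by
  simp [npdf_eq]

lemma npdf_hasDerivAt (x : ℝ) : HasDerivAt npdf (-x * npdf x) x := by
  have h : ∀ y, npdf y = (Real.sqrt (2 * π))⁻¹ * Real.exp (-(y ^ 2 / 2)) := npdf_eq
  rw [funext h]
  have h1 : HasDerivAt (fun y : ℝ => -(y ^ 2 / 2)) (-x) x := by
    have := ((hasDerivAt_pow 2 x).div_const 2).neg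
    exact this.congr_deriv (by norm_num)
  have h2 := (h1.exp).const_mul (Real.sqrt (2 * π))⁻¹
  convert h2 using 1
  · rfl
  · rfl
  ring

lemma npdf_tendsto_zero : Tendsto npdf atTop (nhds 0) := by
  simp only [funext npdf_eq]
  rw [show (0:ℝ) = (Real.sqrt (2*π))⁻¹ * 0 by ring]
  apply Tendsto.const_mul
  apply Real.tendsto_exp_atBot.comp
  apply tendsto_neg_atBot_iff.mpr
  apply Filter.Tendsto.atTop_div_const (by norm_num)
  exact tendsto_pow_atTop (by norm_num)

lemma cdf_total : stdNormalCDF 0 + ∫ t in Ioi (0:ℝ), npdf t = 1 := by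
  have := MeasureTheory.integral_add_compl (measurableSet_Iic (a := (0:ℝ))) npdf_integrable
  rw [compl_Iic] at this
  rw [stdNormalCDF]
  rw [show (∫ t in Iic (0:ℝ), gaussianPDFReal 0 1 t) = ∫ t in Iic (0:ℝ), npdf t from rfl]
  rw [this]
  exact integral_gaussianPDFReal_eq_one 0 one_ne_zero

lemma cdf_neg_tail (s : ℝ) : stdNormalCDF (-s) = ∫ t in Ioi s, npdf t := by
  rw [stdNormalCDF]
  have : (∫ t in Iic (-s), gaussianPDFReal 0 1 t) = ∫ t in Iic (-s), npdf (-t) := by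
    apply setIntegral_congr_fun (measurableSet_Iic)
    intro t _
    simp only [npdf_even]
    rfl
  rw [this, integral_comp_neg_Iic, neg_neg]

lemma cdf_zero : stdNormalCDF 0 = 1 / 2 := by
  have h1 := cdf_total
  have h2 : stdNormalCDF (-0) = ∫ t in Ioi (0:ℝ), npdf t := cdf_neg_tail 0
  rw [neg_zero] at h2
  rw [← h2] at h1
  linarith

lemma cdf_eq (x : ℝ) : stdNormalCDF x = 1 / 2 + ∫ t in (0:ℝ)..x, npdf t := by
  have := intervalIntegral.integral_Iic_sub_Iic (f := npdf) (μ := volume)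
    (npdf_integrable.integrableOn) (npdf_integrable.integrableOn) (a := 0) (b := x)
  have h0 : stdNormalCDF 0 = 1/2 := cdf_zero
  rw [stdNormalCDF]
  rw [show (∫ t in Iic x, gaussianPDFReal 0 1 t) = ∫ t in Iic x, npdf t from rfl]
  rw [← this]
  rw [show (∫ t in Iic (0:ℝ), npdf t) = stdNormalCDF 0 from rfl, h0]
  ring

lemma cdf_hasDerivAt (x : ℝ) : HasDerivAt stdNormalCDF (npdf x) x := by
  have h : HasDerivAt (fun u => ∫ t in (0:ℝ)..u, npdf t) (npdf x) x := by
    apply intervalIntegral.integral_hasDerivAt_right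
    · exact npdf_cont.intervalIntegrable 0 x
    · exact npdf_cont.stronglyMeasurable.stronglyMeasurableAtFilter
    · exact npdf_cont.continuousAt
  have := h.const_add (1/2 : ℝ)
  convert this using 1
  · rfl
  · rfl
  funext u
  exact cdf_eq u

lemma cdf_mono : StrictMono stdNormalCDF :=
  strictMono_of_hasDerivAt_pos (fun x => cdf_hasDerivAt x) (fun x => npdf_pos x)

lemma key_integrableOn {s : ℝ} (hs : 0 < s) :
    IntegrableOn (fun t => t * npdf t) (Ioi s) := by
  have h := integrableOn_rpow_mul_exp_neg_mul_sq (b := 1/2) (by norm_num) (s := 1) (by norm_num)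
  have h2 : IntegrableOn (fun x : ℝ => (Real.sqrt (2*π))⁻¹ * (x ^ (1:ℝ) * Real.exp (-(1/2) * x ^ 2))) (Ioi 0) :=
    h.const_mul _
  have h3 : IntegrableOn (fun t => t * npdf t) (Ioi 0) := by
    apply h2.congr_fun ?_ measurableSet_Ioi
    intro t _
    simp only [npdf_eq, Real.rpow_one, pow_one]
    ring
  exact h3.mono_set (Ioi_subset_Ioi hs.le)

lemma integral_Ioi_mul_npdf {s : ℝ} (hs : 0 < s) :
    ∫ t in Ioi s, t * npdf t = npdf s := by
  have h := integral_Ioi_of_hasDerivAt_of_tendsto' (f := fun t => -npdf t)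
    (f' := fun t => t * npdf t) (a := s) (m := 0)
    (fun x _ => by exact (npdf_hasDerivAt x).neg.congr_deriv (by ring))
    (key_integrableOn hs)
    (by simpa using npdf_tendsto_zero.neg)
  rw [h]; ring

lemma mills {s : ℝ} (hs : 0 < s) : stdNormalCDF (-s) ≤ npdf s / s := by
  rw [cdf_neg_tail]
  have hint : IntegrableOn (fun t => s⁻¹ * (t * npdf t)) (Ioi s) :=
    (key_integrableOn hs).const_mul _
  have h1 : ∫ t in Ioi s, npdf t ≤ ∫ t in Ioi s, s⁻¹ * (t * npdf t) := by
    apply setIntegral_mono_on (npdf_integrable.integrableOn) hint measurableSet_Ioi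
    intro t ht
    rw [mem_Ioi] at ht
    have h2 : 1 ≤ s⁻¹ * t := by
      rw [← div_eq_inv_mul, le_div_iff₀ hs]; linarith
    nlinarith [npdf_pos t]
  calc ∫ t in Ioi s, npdf t ≤ ∫ t in Ioi s, s⁻¹ * (t * npdf t) := h1
    _ = s⁻¹ * ∫ t in Ioi s, t * npdf t := by rw [integral_const_mul]
    _ = npdf s / s := by rw [integral_Ioi_mul_npdf hs, div_eq_inv_mul]

/-- The rescaled speed function. -/
noncomputable def g (u : ℝ) : ℝ := 2 * u ^ 2 * stdNormalCDF (-u / 2)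

/-- First-order-condition function (ratio form). -/
noncomputable def rho (u : ℝ) : ℝ := 4 * stdNormalCDF (-u / 2) / npdf (u / 2) - u

lemma cdf_half_hasDerivAt (u : ℝ) :
    HasDerivAt (fun u : ℝ => stdNormalCDF (-u / 2)) (-(npdf (u / 2)) / 2) u := by
  have hin : HasDerivAt (fun u : ℝ => -u / 2) (-1 / 2 : ℝ) u := by
    simpa using ((hasDerivAt_id u).neg.div_const 2)
  have := (cdf_hasDerivAt (-u / 2)).comp u hin
  convert this using 1
  · rfl
  · rfl
  · rfl
  rw [show -u / 2 = -(u/2) by ring, npdf_even]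
  ring

lemma npdf_half_hasDerivAt (u : ℝ) :
    HasDerivAt (fun u : ℝ => npdf (u / 2)) (-(u / 4) * npdf (u / 2)) u := by
  have hin : HasDerivAt (fun u : ℝ => u / 2) (1 / 2 : ℝ) u := by
    simpa using (hasDerivAt_id u).div_const 2
  have := (npdf_hasDerivAt (u / 2)).comp u hin
  convert this using 1
  · rfl
  · rfl
  · rfl
  ring

lemma g_hasDerivAt (u : ℝ) :
    HasDerivAt g (u * npdf (u / 2) * rho u) u := by
  have h1 : HasDerivAt (fun u : ℝ => 2 * u ^ 2) (4 * u) u := by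
    have := (hasDerivAt_pow 2 u).const_mul (2:ℝ)
    convert this using 1
    · rfl
    · rfl
    norm_num
    ring
  have h2 := h1.mul (cdf_half_hasDerivAt u)
  have heq : ((fun u : ℝ => 2 * u ^ 2) * fun u : ℝ => stdNormalCDF (-u / 2)) = g := rfl
  rw [heq] at h2
  convert h2 using 1
  · rfl
  · rfl
  rw [rho]
  field_simp [(npdf_pos (u/2)).ne']
  ring

lemma rho_hasDerivAt (u : ℝ) :
    HasDerivAt rho (u * stdNormalCDF (-u / 2) / npdf (u / 2) - 3) u := by
  have h1 := ((cdf_half_hasDerivAt u).const_mul (4:ℝ)).div (npdf_half_hasDerivAt u)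
    (npdf_pos (u/2)).ne'
  have h2 := h1.sub (hasDerivAt_id u)
  convert h2 using 1
  · rfl
  · rfl
  · rfl
  have hp := (npdf_pos (u/2)).ne'
  field_simp
  ring

lemma rho_deriv_neg {u : ℝ} (hu : 0 < u) :
    u * stdNormalCDF (-u / 2) / npdf (u / 2) - 3 < 0 := by
  have hm := mills (s := u / 2) (by linarith)
  rw [show -(u/2) = -u/2 by ring] at hm
  have hp := npdf_pos (u / 2)
  have h2 : u * stdNormalCDF (-u / 2) / npdf (u / 2) ≤ 2 := by
    rw [div_le_iff₀ hp]
    have : stdNormalCDF (-u / 2) ≤ npdf (u/2) / (u/2) := hm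
    rw [le_div_iff₀ (by linarith : (0:ℝ) < u/2)] at this
    nlinarith
  linarith

lemma rho_strictAnti : StrictAntiOn rho (Ici 0) := by
  apply strictAntiOn_of_deriv_neg (convex_Ici 0)
  · exact Continuous.continuousOn
      (continuous_iff_continuousAt.mpr fun x => (rho_hasDerivAt x).continuousAt)
  · intro u hu
    rw [interior_Ici] at hu
    rw [(rho_hasDerivAt u).deriv]
    exact rho_deriv_neg hu
/-! ### Numerical approximation of the Gaussian integral -/

noncomputable def Pc (t : ℝ) : ℝ :=
  1 - t^2/2 + t^4/8 - t^6/48 + t^8/384 - t^10/3840 + t^12/46080 - t^14/645120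

noncomputable def Ec (t : ℝ) : ℝ := 9 * t^16 / 82575360

noncomputable def Qc (x : ℝ) : ℝ :=
  x - x^3/6 + x^5/40 - x^7/336 + x^9/3456 - x^11/42240 + x^13/599040 - x^15/9676800

noncomputable def Rc (x : ℝ) : ℝ := 9 * x^17 / 1403781120

lemma exp_poly_bound {t : ℝ} (ht : t^2 ≤ 2) : |Real.exp (-(t^2/2)) - Pc t| ≤ Ec t := by
  have h1 : |(-(t^2/2))| ≤ 1 := by
    rw [abs_neg, abs_of_nonneg (by positivity)]
    linarith
  have h := Real.exp_bound h1 (n := 8) (by norm_num)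
  have hs : ∑ m ∈ Finset.range 8, (-(t^2/2))^m / m.factorial = Pc t := by
    simp [Finset.sum_range_succ, Nat.factorial, Pc]
    ring
  rw [hs] at h
  refine h.trans (le_of_eq ?_)
  rw [abs_neg, abs_of_nonneg (by positivity), Ec]
  norm_num [Nat.factorial]
  ring

lemma Qc_hasDerivAt (t : ℝ) : HasDerivAt Qc (Pc t) t := by
  have h : HasDerivAt (fun x : ℝ =>
      x - x^3/6 + x^5/40 - x^7/336 + x^9/3456 - x^11/42240 + x^13/599040 - x^15/9676800)
      (1 - (3:ℕ)*t^2/6 + (5:ℕ)*t^4/40 - (7:ℕ)*t^6/336 + (9:ℕ)*t^8/3456 - (11:ℕ)*t^10/42240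
        + (13:ℕ)*t^12/599040 - (15:ℕ)*t^14/9676800) t := by
    exact ((((((((hasDerivAt_id t).sub ((hasDerivAt_pow 3 t).div_const 6)).add
      ((hasDerivAt_pow 5 t).div_const 40)).sub ((hasDerivAt_pow 7 t).div_const 336)).add
      ((hasDerivAt_pow 9 t).div_const 3456)).sub ((hasDerivAt_pow 11 t).div_const 42240)).add
      ((hasDerivAt_pow 13 t).div_const 599040)).sub ((hasDerivAt_pow 15 t).div_const 9676800))
  have heq : (fun x : ℝ =>
      x - x^3/6 + x^5/40 - x^7/336 + x^9/3456 - x^11/42240 + x^13/599040 - x^15/9676800) = Qc := by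
    funext x; rw [Qc]
  rw [heq] at h
  convert h using 1
  rw [Pc]
  push_cast
  ring

lemma integral_Pc (x : ℝ) : ∫ t in (0:ℝ)..x, Pc t = Qc x := by
  have hcont : Continuous Pc := by unfold Pc; fun_prop
  rw [intervalIntegral.integral_eq_sub_of_hasDerivAt
    (fun t _ => Qc_hasDerivAt t) (hcont.intervalIntegrable 0 x)]
  simp [Qc]

lemma integral_Ec (x : ℝ) : ∫ t in (0:ℝ)..x, Ec t = Rc x := by
  have : ∀ t, Ec t = (9/82575360) * t^16 := fun t => by rw [Ec]; ring
  simp only [this]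
  rw [intervalIntegral.integral_const_mul, integral_pow]
  rw [Rc]
  norm_num
  ring

lemma exp_cont : Continuous (fun t : ℝ => Real.exp (-(t^2/2))) := by fun_prop

lemma integral_exp_bound' {x : ℝ} (hx0 : 0 ≤ x) (hx : x ≤ 6/5) :
    ∀ t ∈ Set.uIoc (0:ℝ) x, ‖Real.exp (-(t^2/2)) - Pc t‖ ≤ Ec t := by
  intro t ht
  rw [Set.uIoc_of_le hx0] at ht
  have h1 : 0 < t := ht.1
  have h2 : t ≤ x := ht.2
  have : t^2 ≤ 2 := by nlinarith
  exact exp_poly_bound this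

lemma integral_exp_bound {x : ℝ} (hx0 : 0 ≤ x) (hx : x ≤ 6/5) :
    |(∫ t in (0:ℝ)..x, Real.exp (-(t^2/2))) - Qc x| ≤ Rc x := by
  have hPc : Continuous Pc := by unfold Pc; fun_prop
  have hEc : Continuous Ec := by unfold Ec; fun_prop
  have hsub : (∫ t in (0:ℝ)..x, Real.exp (-(t^2/2))) - Qc x
      = ∫ t in (0:ℝ)..x, (Real.exp (-(t^2/2)) - Pc t) := by
    rw [intervalIntegral.integral_sub (exp_cont.intervalIntegrable 0 x)
      (hPc.intervalIntegrable 0 x), integral_Pc]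
  rw [hsub]
  have h := intervalIntegral.norm_integral_le_abs_of_norm_le (μ := volume) (a := (0:ℝ)) (b := x)
    (f := fun t => Real.exp (-(t^2/2)) - Pc t) (g := Ec) ?_ (hEc.intervalIntegrable 0 x)
  · rw [integral_Ec] at h
    have hR : 0 ≤ Rc x := by rw [Rc]; positivity
    calc |∫ t in (0:ℝ)..x, (Real.exp (-(t^2/2)) - Pc t)| ≤ |Rc x| := h
      _ = Rc x := abs_of_nonneg hR
  · exact MeasureTheory.ae_restrict_of_forall_mem measurableSet_uIoc
      (integral_exp_bound' hx0 hx)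

lemma cdf_neg_eq (x : ℝ) :
    stdNormalCDF (-x) = 1/2 - (Real.sqrt (2*π))⁻¹ * ∫ t in (0:ℝ)..x, Real.exp (-(t^2/2)) := by
  rw [cdf_eq (-x)]
  have h2 : ∫ t in (0:ℝ)..(-x), npdf t = ∫ t in (0:ℝ)..(-x), npdf (-t) := by
    apply intervalIntegral.integral_congr
    intro t _
    show npdf t = npdf (-t)
    rw [npdf_even]
  have h1 : ∫ t in (0:ℝ)..(-x), npdf t = - ∫ t in (0:ℝ)..x, npdf t := by
    rw [h2, intervalIntegral.integral_comp_neg npdf, neg_neg, neg_zero,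
      intervalIntegral.integral_symm]
  have h3 : ∫ t in (0:ℝ)..x, npdf t
      = (Real.sqrt (2*π))⁻¹ * ∫ t in (0:ℝ)..x, Real.exp (-(t^2/2)) := by
    rw [← intervalIntegral.integral_const_mul]
    apply intervalIntegral.integral_congr
    intro t _
    rw [npdf_eq]
  rw [h1, h3]
  ring

lemma sqrt_2pi_lb : 2.50662 < Real.sqrt (2*π) := by
  have h := Real.pi_gt_d6
  nlinarith [Real.sq_sqrt (show (0:ℝ) ≤ 2*π by positivity), Real.sqrt_nonneg (2*π)]

lemma sqrt_2pi_ub : Real.sqrt (2*π) < 2.50663 := by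
  have h := Real.pi_lt_d6
  nlinarith [Real.sq_sqrt (show (0:ℝ) ≤ 2*π by positivity), Real.sqrt_nonneg (2*π)]

lemma invC_lb : (0.398942 : ℝ) ≤ (Real.sqrt (2*π))⁻¹ := by
  have h := sqrt_2pi_ub
  have h0 : (0:ℝ) < Real.sqrt (2*π) := lt_trans (by norm_num) sqrt_2pi_lb
  rw [le_inv_comm₀ (by norm_num) h0]
  nlinarith

lemma invC_ub : (Real.sqrt (2*π))⁻¹ ≤ 0.3989437 := by
  have h := sqrt_2pi_lb
  have h0 : (0:ℝ) < Real.sqrt (2*π) := lt_trans (by norm_num) h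
  rw [inv_le_comm₀ h0 (by norm_num)]
  nlinarith

/-- Generic numeric bounds for the Gaussian CDF at a negative point. -/
lemma cdf_bounds {x jl ju : ℝ} (hx0 : 0 ≤ x) (hx : x ≤ 6/5)
    (hjl : jl ≤ Qc x - Rc x) (hju : Qc x + Rc x ≤ ju) (hj0 : 0 ≤ jl) :
    1/2 - 0.3989437 * ju ≤ stdNormalCDF (-x) ∧
      stdNormalCDF (-x) ≤ 1/2 - 0.398942 * jl := by
  have hb := integral_exp_bound hx0 hx
  rw [abs_le] at hb
  set J := ∫ t in (0:ℝ)..x, Real.exp (-(t^2/2)) with hJ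
  have hJl : jl ≤ J := by linarith [hb.1]
  have hJu : J ≤ ju := by linarith [hb.2]
  have hc1 := invC_lb
  have hc2 := invC_ub
  have hc0 : (0:ℝ) ≤ (Real.sqrt (2*π))⁻¹ := by linarith
  rw [cdf_neg_eq x, ← hJ]
  constructor
  · have : (Real.sqrt (2*π))⁻¹ * J ≤ 0.3989437 * ju :=
      mul_le_mul hc2 hJu (by linarith) (by norm_num)
    linarith
  · have : 0.398942 * jl ≤ (Real.sqrt (2*π))⁻¹ * J :=
      mul_le_mul hc1 hJl hj0 hc0
    linarith

/-- Generic numeric bounds for the Gaussian pdf. -/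
lemma npdf_bounds {x el eu : ℝ} (hx : x^2 ≤ 2)
    (hel : el ≤ Pc x - Ec x) (heu : Pc x + Ec x ≤ eu) (he0 : 0 ≤ el) :
    0.398942 * el ≤ npdf x ∧ npdf x ≤ 0.3989437 * eu := by
  have hb := exp_poly_bound hx
  rw [abs_le] at hb
  set E := Real.exp (-(x^2/2)) with hE
  have hEl : el ≤ E := by linarith [hb.1]
  have hEu : E ≤ eu := by linarith [hb.2]
  have hc1 := invC_lb
  have hc2 := invC_ub
  have hc0 : (0:ℝ) ≤ (Real.sqrt (2*π))⁻¹ := by linarith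
  rw [npdf_eq, ← hE]
  constructor
  · exact mul_le_mul hc1 hEl he0 hc0
  · exact mul_le_mul hc2 hEu (by linarith) (by norm_num)
lemma npdf_def (x : ℝ) : gaussianPDFReal 0 1 x = npdf x := rfl

lemma cdf_a_bounds :
    1/2 - 0.3989437 * 0.9597342 ≤ stdNormalCDF (-(2379/2000 : ℝ)) ∧
      stdNormalCDF (-(2379/2000 : ℝ)) ≤ 1/2 - 0.398942 * 0.9597338 :=
  cdf_bounds (by norm_num) (by norm_num) (by norm_num [Qc, Rc]) (by norm_num [Qc, Rc])
    (by norm_num)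

lemma cdf_b_bounds :
    1/2 - 0.3989437 * 0.9607188 ≤ stdNormalCDF (-(2383/2000 : ℝ)) ∧
      stdNormalCDF (-(2383/2000 : ℝ)) ≤ 1/2 - 0.398942 * 0.9607185 :=
  cdf_bounds (by norm_num) (by norm_num) (by norm_num [Qc, Rc]) (by norm_num [Qc, Rc])
    (by norm_num)

lemma npdf_a_bounds :
    0.398942 * 0.4928937 ≤ npdf (2379/2000 : ℝ) ∧
      npdf (2379/2000 : ℝ) ≤ 0.3989437 * 0.4928973 :=
  npdf_bounds (by norm_num) (by norm_num [Pc, Ec]) (by norm_num [Pc, Ec]) (by norm_num)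

lemma npdf_b_bounds :
    0.398942 * 0.4917214 ≤ npdf (2383/2000 : ℝ) ∧
      npdf (2383/2000 : ℝ) ≤ 0.3989437 * 0.4917251 :=
  npdf_bounds (by norm_num) (by norm_num [Pc, Ec]) (by norm_num [Pc, Ec]) (by norm_num)

lemma rho_a_pos : 0 < rho (2379/1000 : ℝ) := by
  have hΦ := cdf_a_bounds
  have hnp := npdf_a_bounds
  rw [rho]
  have harg : (-(2379/1000 : ℝ)/2) = -(2379/2000 : ℝ) := by norm_num
  have harg2 : ((2379/1000 : ℝ)/2) = (2379/2000 : ℝ) := by norm_num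
  rw [harg, harg2, sub_pos, lt_div_iff₀ (npdf_pos _)]
  nlinarith [hΦ.1, hnp.2]

lemma rho_b_neg : rho (2383/1000 : ℝ) < 0 := by
  have hΦ := cdf_b_bounds
  have hnp := npdf_b_bounds
  rw [rho]
  have harg : (-(2383/1000 : ℝ)/2) = -(2383/2000 : ℝ) := by norm_num
  have harg2 : ((2383/1000 : ℝ)/2) = (2383/2000 : ℝ) := by norm_num
  rw [harg, harg2, sub_neg, div_lt_iff₀ (npdf_pos _)]
  nlinarith [hΦ.2, hnp.1]

lemma exists_root : ∃ u, u ∈ Ioo (2379/1000 : ℝ) (2383/1000) ∧ rho u = 0 := by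
  have hc : ContinuousOn rho (Icc (2379/1000 : ℝ) (2383/1000)) :=
    (continuous_iff_continuousAt.mpr fun x => (rho_hasDerivAt x).continuousAt).continuousOn
  have h := intermediate_value_Ioo' (α := ℝ) (a := (2379/1000 : ℝ)) (b := 2383/1000)
    (by norm_num) hc
  have h0 : (0:ℝ) ∈ Ioo (rho (2383/1000)) (rho (2379/1000)) := ⟨rho_b_neg, rho_a_pos⟩
  obtain ⟨u, hu, hru⟩ := h h0
  exact ⟨u, hu, hru⟩

lemma g_cont : Continuous g :=
  continuous_iff_continuousAt.mpr fun x => (g_hasDerivAt x).continuousAt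

lemma g_strict_max {us : ℝ} (hus0 : 0 < us) (hr : rho us = 0)
    {u : ℝ} (hu : 0 < u) (hne : u ≠ us) : g u < g us := by
  rcases lt_or_gt_of_ne hne with h | h
  · have hmono : StrictMonoOn g (Icc 0 us) := by
      apply strictMonoOn_of_deriv_pos (convex_Icc 0 us) g_cont.continuousOn
      intro x hx
      rw [interior_Icc] at hx
      rw [(g_hasDerivAt x).deriv]
      have hrx : 0 < rho x := by
        have := rho_strictAnti (mem_Ici.mpr hx.1.le) (mem_Ici.mpr hus0.le) hx.2
        rw [hr] at this
        exact this
      exact mul_pos (mul_pos hx.1 (npdf_pos _)) hrx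
    exact hmono ⟨hu.le, h.le⟩ ⟨hus0.le, le_refl us⟩ h
  · have hanti : StrictAntiOn g (Ici us) := by
      apply strictAntiOn_of_deriv_neg (convex_Ici us) g_cont.continuousOn
      intro x hx
      rw [interior_Ici] at hx
      rw [(g_hasDerivAt x).deriv]
      have hx0 : 0 < x := lt_trans hus0 hx
      have hrx : rho x < 0 := by
        have := rho_strictAnti (mem_Ici.mpr hus0.le) (mem_Ici.mpr hx0.le) hx
        rw [hr] at this
        exact this
      exact mul_neg_of_pos_of_neg (mul_pos hx0 (npdf_pos _)) hrx
    exact hanti (self_mem_Ici) (mem_Ici.mpr h.le) h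

end TemperingAux


open TemperingAux in
/-- For each I > 0, the diffusion speed a(ℓ) = 2ℓ²Φ(−ℓ√I/2) attains a unique maximum
over ℓ > 0 at a point ℓ* satisfying the first-order condition
2ℓΦ(−ℓ√I/2) = (ℓ²√I/2)φ(ℓ√I/2), and the induced asymptotic acceptance rate
2Φ(−ℓ*√I/2) is a constant ≈ 0.2338 independent of I. -/
theorem tempering_optimal_acceptance_rate :
    ∃ c : ℝ, |c - 0.2338| < 0.001 ∧
      ∀ I : ℝ, 0 < I →
        ∃ ℓs : ℝ, 0 < ℓs ∧
          (∀ ℓ : ℝ, 0 < ℓ →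
            2 * ℓ ^ 2 * stdNormalCDF (-(ℓ * Real.sqrt I) / 2)
              ≤ 2 * ℓs ^ 2 * stdNormalCDF (-(ℓs * Real.sqrt I) / 2)) ∧
          (∀ ℓ' : ℝ, 0 < ℓ' →
            (∀ ℓ : ℝ, 0 < ℓ →
              2 * ℓ ^ 2 * stdNormalCDF (-(ℓ * Real.sqrt I) / 2)
                ≤ 2 * ℓ' ^ 2 * stdNormalCDF (-(ℓ' * Real.sqrt I) / 2)) → ℓ' = ℓs) ∧
          2 * ℓs * stdNormalCDF (-(ℓs * Real.sqrt I) / 2)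
            = (ℓs ^ 2 * Real.sqrt I / 2) * gaussianPDFReal 0 1 (ℓs * Real.sqrt I / 2) ∧
          2 * stdNormalCDF (-(ℓs * Real.sqrt I) / 2) = c := by
  obtain ⟨us, hus, hrus⟩ := TemperingAux.exists_root
  have hus0 : 0 < us := lt_trans (by norm_num) hus.1
  have hmax : ∀ u : ℝ, 0 < u → g u ≤ g us := by
    intro u hu
    by_cases h : u = us
    · rw [h]
    · exact (g_strict_max hus0 hrus hu h).le
  refine ⟨2 * stdNormalCDF (-us/2), ?_, ?_⟩
  · have h1 : stdNormalCDF (-(2383/2000 : ℝ)) < stdNormalCDF (-us/2) :=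
      cdf_mono (by linarith [hus.2])
    have h2 : stdNormalCDF (-us/2) < stdNormalCDF (-(2379/2000 : ℝ)) :=
      cdf_mono (by linarith [hus.1])
    have hb := cdf_b_bounds
    have ha := cdf_a_bounds
    rw [abs_lt]
    constructor <;> nlinarith [hb.1, ha.2]
  · intro I hI
    have hsI : 0 < Real.sqrt I := Real.sqrt_pos.mpr hI
    have hkey : us / Real.sqrt I * Real.sqrt I = us := div_mul_cancel₀ _ hsI.ne'
    have hg : ∀ ℓ : ℝ, g (ℓ * Real.sqrt I)
        = I * (2 * ℓ ^ 2 * stdNormalCDF (-(ℓ * Real.sqrt I) / 2)) := by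
      intro ℓ
      show 2 * (ℓ * Real.sqrt I) ^ 2 * stdNormalCDF (-(ℓ * Real.sqrt I) / 2) = _
      have h : (ℓ * Real.sqrt I) ^ 2 = ℓ ^ 2 * I := by
        rw [mul_pow, Real.sq_sqrt hI.le]
      rw [h]; ring
    refine ⟨us / Real.sqrt I, by positivity, ?_, ?_, ?_, ?_⟩
    · intro ℓ hℓ
      rw [hkey]
      have h1 := hmax (ℓ * Real.sqrt I) (by positivity)
      have hR : g us = I * (2 * (us / Real.sqrt I) ^ 2 * stdNormalCDF (-us / 2)) := by
        have h2 := hg (us / Real.sqrt I)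
        rw [hkey] at h2
        exact h2
      rw [hg ℓ, hR] at h1
      exact le_of_mul_le_mul_left h1 hI
    · intro ℓ' hℓ' hmax'
      have h1 := hmax' (us / Real.sqrt I) (by positivity)
      rw [hkey] at h1
      have hR : g us = I * (2 * (us / Real.sqrt I) ^ 2 * stdNormalCDF (-us / 2)) := by
        have h2 := hg (us / Real.sqrt I)
        rw [hkey] at h2
        exact h2
      have h2 : g us ≤ g (ℓ' * Real.sqrt I) := by
        rw [hg ℓ', hR]
        exact mul_le_mul_of_nonneg_left h1 hI.le
      have h3 : ℓ' * Real.sqrt I = us := by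
        by_contra hne
        exact absurd h2 (not_le.mpr (g_strict_max hus0 hrus (by positivity) hne))
      rw [eq_div_iff hsI.ne']
      exact h3
    · have hfoc : 4 * stdNormalCDF (-us/2) = us * npdf (us/2) := by
        have h := hrus
        rw [rho, sub_eq_zero] at h
        rw [div_eq_iff (npdf_pos (us/2)).ne'] at h
        linarith [h]
      rw [npdf_def, hkey]
      have hΦ : stdNormalCDF (-us/2) = us * npdf (us/2) / 4 := by linarith
      rw [hΦ]
      have h4 : (us / Real.sqrt I) ^ 2 = us ^ 2 / (Real.sqrt I * Real.sqrt I) := by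
        rw [Real.mul_self_sqrt hI.le, div_pow, Real.sq_sqrt hI.le]
      rw [h4]
      field_simp
      ring
    · rw [hkey]
end

section
/- The function u ↦ u²·Φ(−u/2) on (0,∞), where Φ is the standard normal CDF, has a unique critical point u* > 0 solving 2Φ(−u/2) = (u/2)φ(u/2), this critical point is the global maximum, and 2Φ(−u*/2) ∈ (0.23, 0.24). -/
open ProbabilityTheory

section Aux
open Real MeasureTheory Set Filter

noncomputable def nG (x : ℝ) : ℝ := (Real.sqrt (2 * π))⁻¹ * Real.exp (-x ^ 2 / 2)

lemma gpdf_eq : gaussianPDFReal 0 1 = nG := by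
  funext x
  simp [gaussianPDFReal, nG]

lemma nG_pos (x : ℝ) : 0 < nG x := by
  have : 0 < Real.sqrt (2 * π) := Real.sqrt_pos.2 (by positivity)
  unfold nG; positivity

lemma nG_even (x : ℝ) : nG (-x) = nG x := by simp [nG]

lemma nG_cont : Continuous nG := by
  unfold nG; fun_prop

lemma nG_integrable : Integrable nG := by
  rw [← gpdf_eq]; exact integrable_gaussianPDFReal 0 1

lemma nG_integral : ∫ x, nG x = 1 := by
  rw [← gpdf_eq]; exact integral_gaussianPDFReal_eq_one 0 one_ne_zero

lemma hasDerivAt_nG (x : ℝ) : HasDerivAt nG (-x * nG x) x := by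
  have h1 : HasDerivAt (fun t : ℝ => -t ^ 2 / 2) (-x) x := by
    have := ((hasDerivAt_pow 2 x).neg).div_const 2
    refine this.congr_deriv ?_; push_cast; ring
  have h2 := (h1.exp).const_mul (Real.sqrt (2 * π))⁻¹
  refine h2.congr_deriv ?_
  unfold nG; ring

lemma stdNormalCDF_eq (x : ℝ) :
    stdNormalCDF x = (∫ t in Iic (0:ℝ), nG t) + ∫ t in (0:ℝ)..x, nG t := by
  rw [stdNormalCDF, gpdf_eq, ← intervalIntegral.integral_Iic_sub_Iic
    (nG_integrable.integrableOn) (nG_integrable.integrableOn)]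
  ring

lemma hasDerivAt_cdf (x : ℝ) : HasDerivAt stdNormalCDF (nG x) x := by
  have h : HasDerivAt (fun u => ∫ t in (0:ℝ)..u, nG t) (nG x) x := by
    refine intervalIntegral.integral_hasDerivAt_right
      (nG_integrable.intervalIntegrable) ?_ nG_cont.continuousAt
    exact ⟨univ, univ_mem, nG_cont.aestronglyMeasurable.restrict⟩
  have h2 := h.const_add (∫ t in Iic (0:ℝ), nG t)
  refine HasDerivAt.congr_of_eventuallyEq h2 ?_
  filter_upwards with u using (stdNormalCDF_eq u)

lemma cdf_zero : stdNormalCDF 0 = 1 / 2 := by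
  have hsym : (∫ t in Iic (0:ℝ), nG t) = ∫ t in Ioi (0:ℝ), nG t := by
    have := integral_comp_neg_Iic (0:ℝ) nG
    simp only [neg_zero] at this
    rw [← this]
    exact setIntegral_congr_fun measurableSet_Iic (fun t _ => (nG_even t).symm)
  have htot := intervalIntegral.integral_Iic_add_Ioi (b := (0:ℝ))
    (nG_integrable.integrableOn) (nG_integrable.integrableOn)
  rw [nG_integral] at htot
  rw [stdNormalCDF, gpdf_eq]
  linarith [hsym ▸ htot]

lemma cdf_neg_eq (x : ℝ) : stdNormalCDF (-x) = 1 / 2 - ∫ t in (0:ℝ)..x, nG t := by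
  rw [stdNormalCDF_eq (-x)]
  have h0 : (∫ t in Iic (0:ℝ), nG t) = stdNormalCDF 0 := by
    rw [stdNormalCDF, gpdf_eq]
  have hneg : (∫ t in (0:ℝ)..(-x), nG t) = - ∫ t in (0:ℝ)..x, nG t := by
    have hc := intervalIntegral.integral_comp_neg (a := (0:ℝ)) (b := x) nG
    simp only [neg_zero] at hc
    calc (∫ t in (0:ℝ)..(-x), nG t) = -∫ t in (-x:ℝ)..0, nG t := by
            rw [intervalIntegral.integral_symm]
      _ = -∫ t in (0:ℝ)..x, nG (-t) := by rw [hc]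
      _ = -∫ t in (0:ℝ)..x, nG t := by
            congr 1; exact intervalIntegral.integral_congr (fun t _ => nG_even t)
  rw [h0, cdf_zero, hneg]
  ring

lemma exp_neg_upper {s : ℝ} (h0 : 0 ≤ s) (h1 : s ≤ 1) :
    Real.exp (-s) ≤ 1 - s + s ^ 2 / 2 - s ^ 3 / 6 + 5 * s ^ 4 / 96 := by
  have habs : |(-s)| ≤ 1 := by rw [abs_neg, abs_of_nonneg h0]; exact h1
  have h := Real.exp_bound habs (n := 4) (by norm_num)
  rw [abs_neg, abs_of_nonneg h0] at h
  have h2 := (abs_le.1 h).2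
  have hsum : (∑ m ∈ Finset.range 4, (-s) ^ m / m.factorial)
      = 1 - s + s ^ 2 / 2 - s ^ 3 / 6 := by
    simp [Finset.sum_range_succ, Nat.factorial]
    ring
  rw [hsum] at h2
  norm_num [Nat.factorial] at h2
  nlinarith [pow_nonneg h0 4]

lemma exp_neg_lower {s : ℝ} (h0 : 0 ≤ s) (h1 : s ≤ 1) :
    1 - s + s ^ 2 / 2 - s ^ 3 / 6 + s ^ 4 / 24 - s ^ 5 / 120 - 7 * s ^ 6 / 4320
      ≤ Real.exp (-s) := by
  have habs : |(-s)| ≤ 1 := by rw [abs_neg, abs_of_nonneg h0]; exact h1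
  have h := Real.exp_bound habs (n := 6) (by norm_num)
  rw [abs_neg, abs_of_nonneg h0] at h
  have h2 := (abs_le.1 h).1
  have hsum : (∑ m ∈ Finset.range 6, (-s) ^ m / m.factorial)
      = 1 - s + s ^ 2 / 2 - s ^ 3 / 6 + s ^ 4 / 24 - s ^ 5 / 120 := by
    simp [Finset.sum_range_succ, Nat.factorial]
    ring
  rw [hsum] at h2
  norm_num [Nat.factorial] at h2
  nlinarith [pow_nonneg h0 6]

lemma integral_exp_upper {x : ℝ} (h0 : 0 ≤ x) (h1 : x ≤ 61 / 50) :
    (∫ t in (0:ℝ)..x, Real.exp (-t ^ 2 / 2))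
      ≤ x - x ^ 3 / 6 + x ^ 5 / 40 - x ^ 7 / 336 + 5 * x ^ 9 / 13824 := by
  have hP : ∀ t : ℝ, HasDerivAt
      (fun t : ℝ => t - t ^ 3 / 6 + t ^ 5 / 40 - t ^ 7 / 336 + 5 * t ^ 9 / 13824)
      (1 - t ^ 2 / 2 + t ^ 4 / 8 - t ^ 6 / 48 + 5 * t ^ 8 / 1536) t := by
    intro t
    have h := ((((hasDerivAt_id t).sub ((hasDerivAt_pow 3 t).div_const 6)).add
      ((hasDerivAt_pow 5 t).div_const 40)).sub ((hasDerivAt_pow 7 t).div_const 336)).add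
      (((hasDerivAt_pow 9 t).const_mul (5:ℝ)).div_const 13824)
    refine h.congr_deriv ?_
    push_cast; ring
  have hint : (∫ t in (0:ℝ)..x, (1 - t ^ 2 / 2 + t ^ 4 / 8 - t ^ 6 / 48 + 5 * t ^ 8 / 1536))
      = x - x ^ 3 / 6 + x ^ 5 / 40 - x ^ 7 / 336 + 5 * x ^ 9 / 13824 := by
    rw [intervalIntegral.integral_eq_sub_of_hasDerivAt (fun t _ => hP t)
      ((by fun_prop : Continuous fun t : ℝ =>
        1 - t ^ 2 / 2 + t ^ 4 / 8 - t ^ 6 / 48 + 5 * t ^ 8 / 1536).intervalIntegrable 0 x)]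
    norm_num
  rw [← hint]
  refine intervalIntegral.integral_mono_on h0
    ((by fun_prop : Continuous fun t : ℝ => Real.exp (-t ^ 2 / 2)).intervalIntegrable 0 x)
    ((by fun_prop : Continuous fun t : ℝ =>
        1 - t ^ 2 / 2 + t ^ 4 / 8 - t ^ 6 / 48 + 5 * t ^ 8 / 1536).intervalIntegrable 0 x)
    (fun t ht => ?_)
  obtain ⟨ht0, ht1⟩ := ht
  have hs0 : (0:ℝ) ≤ t ^ 2 / 2 := by positivity
  have hs1 : t ^ 2 / 2 ≤ 1 := by nlinarith
  have h := exp_neg_upper hs0 hs1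
  have he : -t ^ 2 / 2 = -(t ^ 2 / 2) := by ring
  rw [he]
  nlinarith [h]

lemma integral_exp_lower {x : ℝ} (h0 : 0 ≤ x) (h1 : x ≤ 61 / 50) :
    x - x ^ 3 / 6 + x ^ 5 / 40 - x ^ 7 / 336 + x ^ 9 / 3456 - x ^ 11 / 42240
        - 7 * x ^ 13 / 3594240
      ≤ ∫ t in (0:ℝ)..x, Real.exp (-t ^ 2 / 2) := by
  have hP : ∀ t : ℝ, HasDerivAt
      (fun t : ℝ => t - t ^ 3 / 6 + t ^ 5 / 40 - t ^ 7 / 336 + t ^ 9 / 3456 - t ^ 11 / 42240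
        - 7 * t ^ 13 / 3594240)
      (1 - t ^ 2 / 2 + t ^ 4 / 8 - t ^ 6 / 48 + t ^ 8 / 384 - t ^ 10 / 3840
        - 7 * t ^ 12 / 276480) t := by
    intro t
    have h := ((((((hasDerivAt_id t).sub ((hasDerivAt_pow 3 t).div_const 6)).add
      ((hasDerivAt_pow 5 t).div_const 40)).sub ((hasDerivAt_pow 7 t).div_const 336)).add
      ((hasDerivAt_pow 9 t).div_const 3456)).sub ((hasDerivAt_pow 11 t).div_const 42240)).sub
      (((hasDerivAt_pow 13 t).const_mul (7:ℝ)).div_const 3594240)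
    refine h.congr_deriv ?_
    push_cast; ring
  have hint : (∫ t in (0:ℝ)..x, (1 - t ^ 2 / 2 + t ^ 4 / 8 - t ^ 6 / 48 + t ^ 8 / 384
        - t ^ 10 / 3840 - 7 * t ^ 12 / 276480))
      = x - x ^ 3 / 6 + x ^ 5 / 40 - x ^ 7 / 336 + x ^ 9 / 3456 - x ^ 11 / 42240
        - 7 * x ^ 13 / 3594240 := by
    rw [intervalIntegral.integral_eq_sub_of_hasDerivAt (fun t _ => hP t)
      ((by fun_prop : Continuous fun t : ℝ => 1 - t ^ 2 / 2 + t ^ 4 / 8 - t ^ 6 / 48 + t ^ 8 / 384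
        - t ^ 10 / 3840 - 7 * t ^ 12 / 276480).intervalIntegrable 0 x)]
    norm_num
  rw [← hint]
  refine intervalIntegral.integral_mono_on h0
    ((by fun_prop : Continuous fun t : ℝ => 1 - t ^ 2 / 2 + t ^ 4 / 8 - t ^ 6 / 48 + t ^ 8 / 384
        - t ^ 10 / 3840 - 7 * t ^ 12 / 276480).intervalIntegrable 0 x)
    ((by fun_prop : Continuous fun t : ℝ => Real.exp (-t ^ 2 / 2)).intervalIntegrable 0 x)
    (fun t ht => ?_)
  obtain ⟨ht0, ht1⟩ := ht
  have hs0 : (0:ℝ) ≤ t ^ 2 / 2 := by positivity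
  have hs1 : t ^ 2 / 2 ≤ 1 := by nlinarith
  have := exp_neg_lower hs0 hs1
  calc (1 - t ^ 2 / 2 + t ^ 4 / 8 - t ^ 6 / 48 + t ^ 8 / 384 - t ^ 10 / 3840
        - 7 * t ^ 12 / 276480) ≤ Real.exp (-(t ^ 2 / 2)) := by nlinarith [this]
    _ = Real.exp (-t ^ 2 / 2) := by rw [neg_div]

lemma nG_tendsto_atBot : Tendsto nG atBot (nhds 0) := by
  have h1 : Tendsto (fun t : ℝ => -t ^ 2 / 2) atBot atBot := by
    have hsq : Tendsto (fun t : ℝ => t ^ 2) atBot atTop := by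
      refine tendsto_atTop_mono' atBot ?_ tendsto_neg_atBot_atTop
      filter_upwards [eventually_le_atBot (-1:ℝ)] with t ht
      nlinarith
    have h2 := tendsto_neg_atTop_atBot.comp hsq
    refine (h2.atBot_div_const (by norm_num : (0:ℝ) < 2)).congr (fun t => ?_)
    simp [Function.comp]
  have h2 := Real.tendsto_exp_atBot.comp h1
  have h3 := h2.const_mul (Real.sqrt (2 * π))⁻¹
  simp only [Function.comp_def, mul_zero] at h3; exact h3

lemma integrable_mul_nG : Integrable (fun t : ℝ => -t * nG t) := by
  have h := (integrable_mul_exp_neg_mul_sq (b := 1/2) (by norm_num)).const_mul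
    (-(Real.sqrt (2 * π))⁻¹)
  refine h.congr (ae_of_all _ (fun t => ?_))
  show -(Real.sqrt (2 * π))⁻¹ * (t * Real.exp (-(1/2) * t ^ 2)) = -t * nG t
  unfold nG
  rw [show -(1/2 : ℝ) * t ^ 2 = -t ^ 2 / 2 by ring]
  ring

lemma integral_mul_nG (a : ℝ) : (∫ t in Iic a, -t * nG t) = nG a := by
  have := integral_Iic_of_hasDerivAt_of_tendsto (a := a) (m := 0)
    (nG_cont.continuousWithinAt)
    (fun t _ => hasDerivAt_nG t)
    (integrable_mul_nG.integrableOn)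
    nG_tendsto_atBot
  simpa using this

lemma mills {x : ℝ} (hx : 0 < x) : stdNormalCDF (-x) ≤ nG x / x := by
  have hmono : stdNormalCDF (-x) ≤ ∫ t in Iic (-x), x⁻¹ * (-t * nG t) := by
    rw [stdNormalCDF, gpdf_eq]
    refine setIntegral_mono_on (nG_integrable.integrableOn)
      ((integrable_mul_nG.const_mul x⁻¹).integrableOn) measurableSet_Iic (fun t ht => ?_)
    have ht' : t ≤ -x := ht
    have h1 : 1 ≤ x⁻¹ * (-t) := by
      rw [← div_eq_inv_mul (-t) x] at *
      rw [le_div_iff₀ hx]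
      linarith
    have := nG_pos t
    nlinarith
  rw [MeasureTheory.integral_const_mul, integral_mul_nG, nG_even] at hmono
  rw [div_eq_inv_mul]
  exact hmono

noncomputable def gfun (u : ℝ) : ℝ :=
  2 * stdNormalCDF (-u / 2) - u / 2 * nG (u / 2)

lemma hasDerivAt_gfun (u : ℝ) :
    HasDerivAt gfun (nG (u / 2) * (u ^ 2 / 8 - 3 / 2)) u := by
  have hin : HasDerivAt (fun u : ℝ => -u / 2) (-(1 / 2)) u := by
    have := ((hasDerivAt_id u).neg).div_const 2
    refine this.congr_deriv ?_; norm_num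
  have hin2 : HasDerivAt (fun u : ℝ => u / 2) (1 / 2) u := by
    have := (hasDerivAt_id u).div_const 2
    exact this
  have hA : HasDerivAt (fun u : ℝ => stdNormalCDF (-u / 2))
      (nG (u / 2) * (-(1 / 2))) u := by
    have := (hasDerivAt_cdf (-u / 2)).comp u hin
    rw [show -u / 2 = -(u / 2) by ring, nG_even] at this
    exact this
  have hG2 : HasDerivAt (fun u : ℝ => nG (u / 2))
      (-(u / 2) * nG (u / 2) * (1 / 2)) u :=
    by have := (hasDerivAt_nG (u / 2)).comp u hin2; exact this
  have hB : HasDerivAt (fun u : ℝ => u / 2 * nG (u / 2))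
      (1 / 2 * nG (u / 2) + u / 2 * (-(u / 2) * nG (u / 2) * (1 / 2))) u :=
    hin2.mul hG2
  have := (hA.const_mul (2:ℝ)).sub hB
  refine this.congr_deriv ?_
  ring

lemma gfun_eq (u : ℝ) :
    gfun u = 1 - (Real.sqrt (2 * π))⁻¹ *
      (2 * (∫ t in (0:ℝ)..(u / 2), Real.exp (-t ^ 2 / 2))
        + u / 2 * Real.exp (-(u / 2) ^ 2 / 2)) := by
  have h1 : (-u / 2 : ℝ) = -(u / 2) := by ring
  rw [gfun, h1, cdf_neg_eq]
  have h2 : (∫ t in (0:ℝ)..(u / 2), nG t)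
      = (Real.sqrt (2 * π))⁻¹ * ∫ t in (0:ℝ)..(u / 2), Real.exp (-t ^ 2 / 2) := by
    rw [← intervalIntegral.integral_const_mul]
    exact intervalIntegral.integral_congr (fun t _ => rfl)
  rw [h2]
  unfold nG
  ring

lemma sqrt_two_pi_bounds :
    (2.50662827 : ℝ) ≤ Real.sqrt (2 * π) ∧ Real.sqrt (2 * π) ≤ 2.50662828 := by
  have h1 := Real.pi_gt_d20
  have h2 := Real.pi_lt_d20
  have hs := Real.sq_sqrt (by positivity : (0:ℝ) ≤ 2 * π)
  have hn := Real.sqrt_nonneg (2 * π)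
  constructor <;> nlinarith

lemma sqrt_two_pi_pos : (0:ℝ) < Real.sqrt (2 * π) :=
  lt_of_lt_of_le (by norm_num) sqrt_two_pi_bounds.1

lemma gfun_A : 0 < gfun (23 / 10) := by
  rw [gfun_eq]
  have hx : ((23:ℝ) / 10) / 2 = 23 / 20 := by norm_num
  rw [hx]
  set S := Real.sqrt (2 * π) with hS
  have hSpos := sqrt_two_pi_pos
  have hJ : (∫ t in (0:ℝ)..(23/20 : ℝ), Real.exp (-t ^ 2 / 2))
      ≤ (23/20 : ℝ) - (23/20:ℝ) ^ 3 / 6 + (23/20:ℝ) ^ 5 / 40 - (23/20:ℝ) ^ 7 / 336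
        + 5 * (23/20:ℝ) ^ 9 / 13824 :=
    integral_exp_upper (by norm_num) (by norm_num)
  have hE : Real.exp (-((23:ℝ)/20) ^ 2 / 2)
      ≤ 1 - (529/800:ℝ) + (529/800:ℝ) ^ 2 / 2 - (529/800:ℝ) ^ 3 / 6
        + 5 * (529/800:ℝ) ^ 4 / 96 := by
    have := exp_neg_upper (s := (529/800:ℝ)) (by norm_num) (by norm_num)
    rw [show -((23:ℝ)/20) ^ 2 / 2 = -(529/800 : ℝ) by norm_num]
    exact this
  have hkey : 2 * (∫ t in (0:ℝ)..(23/20 : ℝ), Real.exp (-t ^ 2 / 2))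
      + (23/10:ℝ) / 2 * Real.exp (-((23:ℝ)/20) ^ 2 / 2) < S := by
    calc 2 * (∫ t in (0:ℝ)..(23/20 : ℝ), Real.exp (-t ^ 2 / 2))
        + (23/10:ℝ) / 2 * Real.exp (-((23:ℝ)/20) ^ 2 / 2)
        ≤ 2 * ((23/20 : ℝ) - (23/20:ℝ) ^ 3 / 6 + (23/20:ℝ) ^ 5 / 40 - (23/20:ℝ) ^ 7 / 336
            + 5 * (23/20:ℝ) ^ 9 / 13824)
          + (23/10:ℝ) / 2 * (1 - (529/800:ℝ) + (529/800:ℝ) ^ 2 / 2 - (529/800:ℝ) ^ 3 / 6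
            + 5 * (529/800:ℝ) ^ 4 / 96) := by
          have := Real.exp_pos (-((23:ℝ)/20) ^ 2 / 2)
          nlinarith
      _ < 2.50662827 := by norm_num
      _ ≤ S := sqrt_two_pi_bounds.1
  have hpos : 0 < S⁻¹ := inv_pos.2 hSpos
  have h1 : S⁻¹ * (2 * (∫ t in (0:ℝ)..(23/20 : ℝ), Real.exp (-t ^ 2 / 2))
      + (23/10:ℝ) / 2 * Real.exp (-((23:ℝ)/20) ^ 2 / 2)) < S⁻¹ * S := by
    exact mul_lt_mul_of_pos_left hkey hpos
  rw [inv_mul_cancel₀ (ne_of_gt hSpos)] at h1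
  linarith

lemma gfun_B : gfun (61 / 25) < 0 := by
  rw [gfun_eq]
  have hx : ((61:ℝ) / 25) / 2 = 61 / 50 := by norm_num
  rw [hx]
  set S := Real.sqrt (2 * π) with hS
  have hSpos := sqrt_two_pi_pos
  have hJ : (61/50 : ℝ) - (61/50:ℝ) ^ 3 / 6 + (61/50:ℝ) ^ 5 / 40 - (61/50:ℝ) ^ 7 / 336
        + (61/50:ℝ) ^ 9 / 3456 - (61/50:ℝ) ^ 11 / 42240 - 7 * (61/50:ℝ) ^ 13 / 3594240
      ≤ ∫ t in (0:ℝ)..(61/50 : ℝ), Real.exp (-t ^ 2 / 2) :=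
    integral_exp_lower (by norm_num) (by norm_num)
  have hE : 1 - (3721/5000:ℝ) + (3721/5000:ℝ) ^ 2 / 2 - (3721/5000:ℝ) ^ 3 / 6
        + (3721/5000:ℝ) ^ 4 / 24 - (3721/5000:ℝ) ^ 5 / 120 - 7 * (3721/5000:ℝ) ^ 6 / 4320
      ≤ Real.exp (-((61:ℝ)/50) ^ 2 / 2) := by
    have := exp_neg_lower (s := (3721/5000:ℝ)) (by norm_num) (by norm_num)
    rw [show -((61:ℝ)/50) ^ 2 / 2 = -(3721/5000 : ℝ) by norm_num]
    exact this
  have hkey : S < 2 * (∫ t in (0:ℝ)..(61/50 : ℝ), Real.exp (-t ^ 2 / 2))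
      + (61/25:ℝ) / 2 * Real.exp (-((61:ℝ)/50) ^ 2 / 2) := by
    calc S ≤ 2.50662828 := sqrt_two_pi_bounds.2
      _ < 2 * ((61/50 : ℝ) - (61/50:ℝ) ^ 3 / 6 + (61/50:ℝ) ^ 5 / 40 - (61/50:ℝ) ^ 7 / 336
            + (61/50:ℝ) ^ 9 / 3456 - (61/50:ℝ) ^ 11 / 42240 - 7 * (61/50:ℝ) ^ 13 / 3594240)
          + (61/25:ℝ) / 2 * (1 - (3721/5000:ℝ) + (3721/5000:ℝ) ^ 2 / 2 - (3721/5000:ℝ) ^ 3 / 6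
            + (3721/5000:ℝ) ^ 4 / 24 - (3721/5000:ℝ) ^ 5 / 120
            - 7 * (3721/5000:ℝ) ^ 6 / 4320) := by norm_num
      _ ≤ _ := by nlinarith
  have hpos : 0 < S⁻¹ := inv_pos.2 hSpos
  have h1 : S⁻¹ * S < S⁻¹ * (2 * (∫ t in (0:ℝ)..(61/50 : ℝ), Real.exp (-t ^ 2 / 2))
      + (61/25:ℝ) / 2 * Real.exp (-((61:ℝ)/50) ^ 2 / 2)) :=
    mul_lt_mul_of_pos_left hkey hpos
  rw [inv_mul_cancel₀ (ne_of_gt hSpos)] at h1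
  linarith

lemma gfun_cont : Continuous gfun :=
  continuous_iff_continuousAt.2 fun u => (hasDerivAt_gfun u).continuousAt

lemma gfun_strictAntiOn : StrictAntiOn gfun (Icc (0:ℝ) 3) := by
  refine strictAntiOn_of_deriv_neg (convex_Icc 0 3) gfun_cont.continuousOn (fun x hx => ?_)
  rw [interior_Icc] at hx
  rw [(hasDerivAt_gfun x).deriv]
  have h1 := nG_pos (x / 2)
  have h2 : x ^ 2 / 8 - 3 / 2 < 0 := by nlinarith [hx.1, hx.2]
  nlinarith

lemma gfun_neg_of_ge {u : ℝ} (hu : 3 ≤ u) : gfun u < 0 := by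
  have hx : (0:ℝ) < u / 2 := by linarith
  have hm := mills hx
  rw [show (-(u/2) : ℝ) = -u / 2 by ring] at hm
  have hG := nG_pos (u / 2)
  have h1 : gfun u ≤ 2 * (nG (u / 2) / (u / 2)) - u / 2 * nG (u / 2) := by
    rw [gfun]; linarith
  have h2 : 2 * (nG (u / 2) / (u / 2)) - u / 2 * nG (u / 2) < 0 := by
    rw [div_eq_mul_inv]
    have hinv : (u / 2)⁻¹ ≤ (3 / 2 : ℝ)⁻¹ := by
      apply inv_anti₀ (by norm_num)
      linarith
    have : 2 * (nG (u / 2) * (u / 2)⁻¹) ≤ 2 * (nG (u / 2) * (3 / 2 : ℝ)⁻¹) := by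
      nlinarith
    nlinarith
  linarith

lemma exists_root : ∃ us, us ∈ Ioo (23/10 : ℝ) (61/25) ∧ gfun us = 0 := by
  have hsub : Icc (gfun (61/25)) (gfun (23/10)) ⊆ gfun '' Icc (23/10 : ℝ) (61/25) :=
    intermediate_value_Icc' (by norm_num) gfun_cont.continuousOn
  have h0 : (0:ℝ) ∈ Icc (gfun (61/25)) (gfun (23/10)) :=
    ⟨le_of_lt gfun_B, le_of_lt gfun_A⟩
  obtain ⟨us, hus, heq⟩ := hsub h0
  refine ⟨us, ⟨?_, ?_⟩, heq⟩
  · rcases eq_or_lt_of_le hus.1 with h | h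
    · exact absurd (h ▸ heq) (ne_of_gt gfun_A)
    · exact h
  · rcases eq_or_lt_of_le hus.2 with h | h
    · exact absurd (h ▸ heq) (ne_of_lt gfun_B)
    · exact h

noncomputable def kfun (x : ℝ) : ℝ := x * nG x

lemma kfun_strictAntiOn : StrictAntiOn kfun (Icc (1:ℝ) 2) := by
  refine strictAntiOn_of_deriv_neg (convex_Icc 1 2) ?_ (fun x hx => ?_)
  · exact (continuous_id.mul nG_cont).continuousOn
  · rw [interior_Icc] at hx
    have hd : HasDerivAt kfun (1 * nG x + x * (-x * nG x)) x :=
      (hasDerivAt_id x).mul (hasDerivAt_nG x)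
    rw [hd.deriv]
    have h1 := nG_pos x
    have hx1 : 1 < x := hx.1
    have h2 : nG x < x ^ 2 * nG x := by nlinarith [mul_pos (show (0:ℝ) < x ^ 2 - 1 by nlinarith) h1]
    nlinarith [h2]

lemma kfun_upper : kfun (23/20) < 0.24 := by
  unfold kfun nG
  set S := Real.sqrt (2 * π) with hS
  have hSpos := sqrt_two_pi_pos
  have hE : Real.exp (-((23:ℝ)/20) ^ 2 / 2)
      ≤ 1 - (529/800:ℝ) + (529/800:ℝ) ^ 2 / 2 - (529/800:ℝ) ^ 3 / 6
        + 5 * (529/800:ℝ) ^ 4 / 96 := by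
    have := exp_neg_upper (s := (529/800:ℝ)) (by norm_num) (by norm_num)
    rw [show -((23:ℝ)/20) ^ 2 / 2 = -(529/800 : ℝ) by norm_num]
    exact this
  have hInv : S⁻¹ ≤ (2.50662827 : ℝ)⁻¹ := by
    apply inv_anti₀ (by norm_num) sqrt_two_pi_bounds.1
  have hIpos : (0:ℝ) < S⁻¹ := inv_pos.2 hSpos
  have hEpos := Real.exp_pos (-((23:ℝ)/20) ^ 2 / 2)
  calc (23/20:ℝ) * (S⁻¹ * Real.exp (-((23:ℝ)/20) ^ 2 / 2))
      ≤ (23/20:ℝ) * ((2.50662827 : ℝ)⁻¹ * (1 - (529/800:ℝ) + (529/800:ℝ) ^ 2 / 2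
        - (529/800:ℝ) ^ 3 / 6 + 5 * (529/800:ℝ) ^ 4 / 96)) := by
        have h1 : S⁻¹ * Real.exp (-((23:ℝ)/20) ^ 2 / 2)
            ≤ (2.50662827 : ℝ)⁻¹ * (1 - (529/800:ℝ) + (529/800:ℝ) ^ 2 / 2
              - (529/800:ℝ) ^ 3 / 6 + 5 * (529/800:ℝ) ^ 4 / 96) := by
          apply mul_le_mul hInv hE (le_of_lt hEpos) (by norm_num)
        nlinarith
    _ < 0.24 := by norm_num

lemma kfun_lower : (0.23:ℝ) < kfun (61/50) := by
  unfold kfun nG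
  set S := Real.sqrt (2 * π) with hS
  have hSpos := sqrt_two_pi_pos
  have hE : 1 - (3721/5000:ℝ) + (3721/5000:ℝ) ^ 2 / 2 - (3721/5000:ℝ) ^ 3 / 6
        + (3721/5000:ℝ) ^ 4 / 24 - (3721/5000:ℝ) ^ 5 / 120 - 7 * (3721/5000:ℝ) ^ 6 / 4320
      ≤ Real.exp (-((61:ℝ)/50) ^ 2 / 2) := by
    have := exp_neg_lower (s := (3721/5000:ℝ)) (by norm_num) (by norm_num)
    rw [show -((61:ℝ)/50) ^ 2 / 2 = -(3721/5000 : ℝ) by norm_num]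
    exact this
  have hInv : (2.50662828 : ℝ)⁻¹ ≤ S⁻¹ := by
    apply inv_anti₀ hSpos sqrt_two_pi_bounds.2
  calc (0.23:ℝ) < (61/50:ℝ) * ((2.50662828 : ℝ)⁻¹ * (1 - (3721/5000:ℝ)
        + (3721/5000:ℝ) ^ 2 / 2 - (3721/5000:ℝ) ^ 3 / 6 + (3721/5000:ℝ) ^ 4 / 24
        - (3721/5000:ℝ) ^ 5 / 120 - 7 * (3721/5000:ℝ) ^ 6 / 4320)) := by norm_num
    _ ≤ (61/50:ℝ) * (S⁻¹ * Real.exp (-((61:ℝ)/50) ^ 2 / 2)) := by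
        have h1 : (2.50662828 : ℝ)⁻¹ * (1 - (3721/5000:ℝ)
            + (3721/5000:ℝ) ^ 2 / 2 - (3721/5000:ℝ) ^ 3 / 6 + (3721/5000:ℝ) ^ 4 / 24
            - (3721/5000:ℝ) ^ 5 / 120 - 7 * (3721/5000:ℝ) ^ 6 / 4320)
            ≤ S⁻¹ * Real.exp (-((61:ℝ)/50) ^ 2 / 2) := by
          apply mul_le_mul hInv hE (by norm_num) (le_of_lt (inv_pos.2 hSpos))
        nlinarith

lemma hasDerivAt_cdf_half (u : ℝ) :
    HasDerivAt (fun u : ℝ => stdNormalCDF (-u / 2)) (nG (u / 2) * (-(1 / 2))) u := by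
  have hin : HasDerivAt (fun u : ℝ => -u / 2) (-(1 / 2)) u := by
    have := ((hasDerivAt_id u).neg).div_const 2
    refine this.congr_deriv ?_; norm_num
  have := (hasDerivAt_cdf (-u / 2)).comp u hin
  rw [show -u / 2 = -(u / 2) by ring, nG_even] at this
  exact this

lemma hasDerivAt_hfun (u : ℝ) :
    HasDerivAt (fun u : ℝ => u ^ 2 * stdNormalCDF (-u / 2)) (u * gfun u) u := by
  have h := (hasDerivAt_pow 2 u).mul (hasDerivAt_cdf_half u)
  refine h.congr_deriv ?_
  rw [gfun]
  push_cast
  ring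

theorem optimal_scaling_234' :
    ∃ us : ℝ, 0 < us ∧
      2 * stdNormalCDF (-us / 2) = (us / 2) * gaussianPDFReal 0 1 (us / 2) ∧
      (∀ u : ℝ, 0 < u →
        2 * stdNormalCDF (-u / 2) = (u / 2) * gaussianPDFReal 0 1 (u / 2) → u = us) ∧
      (∀ u : ℝ, 0 < u → u ^ 2 * stdNormalCDF (-u / 2) ≤ us ^ 2 * stdNormalCDF (-us / 2)) ∧
      0.23 < 2 * stdNormalCDF (-us / 2) ∧ 2 * stdNormalCDF (-us / 2) < 0.24 := by
  obtain ⟨us, ⟨hus1, hus2⟩, husroot⟩ := exists_root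
  have huspos : (0:ℝ) < us := by linarith
  have husIcc : us ∈ Icc (0:ℝ) 3 := ⟨le_of_lt huspos, by linarith⟩
  have hroot_iff : ∀ u : ℝ,
      (2 * stdNormalCDF (-u / 2) = (u / 2) * gaussianPDFReal 0 1 (u / 2)) ↔ gfun u = 0 := by
    intro u
    rw [gpdf_eq, gfun]
    constructor <;> intro h <;> linarith
  have g_pos : ∀ u : ℝ, 0 < u → u < us → 0 < gfun u := by
    intro u hu0 huus
    have h := gfun_strictAntiOn ⟨le_of_lt hu0, by linarith⟩ husIcc huus
    rw [husroot] at h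
    exact h
  have g_neg : ∀ u : ℝ, us < u → gfun u < 0 := by
    intro u huus
    rcases le_or_gt u 3 with h3 | h3
    · have h := gfun_strictAntiOn husIcc ⟨by linarith, h3⟩ huus
      rw [husroot] at h
      exact h
    · exact gfun_neg_of_ge (le_of_lt h3)
  refine ⟨us, huspos, (hroot_iff us).2 husroot, ?_, ?_, ?_, ?_⟩
  · -- uniqueness
    intro u hu0 heq
    have hroot := (hroot_iff u).1 heq
    rcases lt_trichotomy u us with h | h | h
    · exact absurd hroot (ne_of_gt (g_pos u hu0 h))
    · exact h
    · exact absurd hroot (ne_of_lt (g_neg u h))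
  · -- maximality
    intro u hu0
    have hmono : StrictMonoOn (fun u : ℝ => u ^ 2 * stdNormalCDF (-u / 2)) (Icc 0 us) := by
      refine strictMonoOn_of_deriv_pos (convex_Icc 0 us) ?_ (fun x hx => ?_)
      · exact Continuous.continuousOn (by
          refine (continuous_pow 2).mul ?_
          exact continuous_iff_continuousAt.2 fun u => (hasDerivAt_cdf_half u).continuousAt)
      · rw [interior_Icc] at hx
        rw [(hasDerivAt_hfun x).deriv]
        exact mul_pos hx.1 (g_pos x hx.1 hx.2)
    have hanti : StrictAntiOn (fun u : ℝ => u ^ 2 * stdNormalCDF (-u / 2)) (Ici us) := by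
      refine strictAntiOn_of_deriv_neg (convex_Ici us) ?_ (fun x hx => ?_)
      · exact Continuous.continuousOn (by
          refine (continuous_pow 2).mul ?_
          exact continuous_iff_continuousAt.2 fun u => (hasDerivAt_cdf_half u).continuousAt)
      · rw [interior_Ici] at hx
        rw [(hasDerivAt_hfun x).deriv]
        have hx0 : (0:ℝ) < x := lt_trans huspos hx
        exact mul_neg_of_pos_of_neg hx0 (g_neg x hx)
    rcases lt_trichotomy u us with h | h | h
    · exact le_of_lt (hmono ⟨le_of_lt hu0, le_of_lt h⟩ ⟨le_of_lt huspos, le_refl us⟩ h)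
    · rw [h]
    · exact le_of_lt (hanti (le_refl us) (le_of_lt h) h)
  · -- lower bound
    have heq : 2 * stdNormalCDF (-us / 2) = kfun (us / 2) := by
      have := (hroot_iff us).2 husroot
      rw [this, gpdf_eq, kfun]
    rw [heq]
    have h := kfun_strictAntiOn
      (⟨by linarith, by linarith⟩ : (us/2 : ℝ) ∈ Icc (1:ℝ) 2)
      (⟨by norm_num, by norm_num⟩ : (61/50 : ℝ) ∈ Icc (1:ℝ) 2)
      (by linarith : us / 2 < 61/50)
    calc (0.23:ℝ) < kfun (61/50) := kfun_lower
      _ < kfun (us / 2) := h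
  · have heq : 2 * stdNormalCDF (-us / 2) = kfun (us / 2) := by
      have := (hroot_iff us).2 husroot
      rw [this, gpdf_eq, kfun]
    rw [heq]
    have h := kfun_strictAntiOn
      (⟨by norm_num, by norm_num⟩ : (23/20 : ℝ) ∈ Icc (1:ℝ) 2)
      (⟨by linarith, by linarith⟩ : (us/2 : ℝ) ∈ Icc (1:ℝ) 2)
      (by linarith : (23/20 : ℝ) < us / 2)
    calc kfun (us / 2) < kfun (23/20) := h
      _ < 0.24 := kfun_upper

end Aux

/-- The function u ↦ u²Φ(−u/2) on (0,∞) has a unique critical point u* > 0, solving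
2Φ(−u/2) = (u/2)φ(u/2); this point is the global maximum on (0,∞), and the
corresponding acceptance rate satisfies 2Φ(−u*/2) ∈ (0.23, 0.24). -/
theorem optimal_scaling_234 :
    ∃ us : ℝ, 0 < us ∧
      2 * stdNormalCDF (-us / 2) = (us / 2) * gaussianPDFReal 0 1 (us / 2) ∧
      (∀ u : ℝ, 0 < u →
        2 * stdNormalCDF (-u / 2) = (u / 2) * gaussianPDFReal 0 1 (u / 2) → u = us) ∧
      (∀ u : ℝ, 0 < u → u ^ 2 * stdNormalCDF (-u / 2) ≤ us ^ 2 * stdNormalCDF (-us / 2)) ∧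
      0.23 < 2 * stdNormalCDF (-us / 2) ∧ 2 * stdNormalCDF (-us / 2) < 0.24 := by
  exact optimal_scaling_234'
end
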